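/- Let F : ℝ^d → ℝ^d, let B ⊆ ℝ^d, and let L ≥ 0 satisfy ‖F(p) − F(q)‖ ≤ L‖p − q‖ for all p, q ∈ B. Let y_* be a strong solution of the IVP y' = F(y) + f(t), y(0) = g with y_*(t) ∈ B for all t ∈ [0,T], let u ∈ X satisfy u(t) ∈ B for all t ∈ [0,T], and set w(t) = g + ∫₀ᵗ (F(u(s)) + f(s)) ds. Then ‖y_* − w‖_{L²(0,T;ℝ^d)} ≤ (L·T/√2) ‖y_* − u‖_{L²(0,T;ℝ^d)}. -/

import Mathlib

open MeasureTheory Set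
open scoped RealInnerProductSpace

noncomputable section

/-- `ℝ^d`. -/
abbrev Euc (d : ℕ) := EuclideanSpace ℝ (Fin d)

/-- `(u, u')` represents an element of `X = H¹(0,T;ℝ^d)`: `u` is absolutely continuous
(equal to the integral of its a.e. derivative `u'`) and `u' ∈ L²(0,T;ℝ^d)`. -/
def MemX {d : ℕ} (T : ℝ) (u u' : ℝ → Euc d) : Prop :=
  MemLp u' 2 (volume.restrict (Icc (0:ℝ) T)) ∧
  ∀ t ∈ Icc (0:ℝ) T, u t = u 0 + ∫ s in (0:ℝ)..t, u' s

/-- The inner product `⟨·,·⟩_X` on `X`. -/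
def innerX {d : ℕ} (T : ℝ) (u u' v v' : ℝ → Euc d) : ℝ :=
  (∫ t in (0:ℝ)..T, ⟪u' t, v' t⟫) + ⟪u 0, v 0⟫

/-- The energy norm `‖·‖_X` on `X`. -/
def normX {d : ℕ} (T : ℝ) (u u' : ℝ → Euc d) : ℝ :=
  Real.sqrt (innerX T u u' u u')

/-- The `L²(0,T;ℝ^d)` norm. -/
def L2norm {d : ℕ} (T : ℝ) (w : ℝ → Euc d) : ℝ :=
  Real.sqrt (∫ t in (0:ℝ)..T, ‖w t‖ ^ 2)

/-- The least-squares objective `J(y; F, f, g)`. -/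
def Jfun {d : ℕ} (T : ℝ) (F : Euc d → Euc d) (f : ℝ → Euc d) (g : Euc d)
    (y y' : ℝ → Euc d) : ℝ :=
  (1/2) * (∫ t in (0:ℝ)..T, ‖y' t - F (y t) - f t‖ ^ 2) + (1/2) * ‖y 0 - g‖ ^ 2

/-- A partition `0 = τ₀ < τ₁ < ⋯ < τ_N = T` of `[0,T]`. -/
structure Partition' (T : ℝ) where
  N : ℕ
  τ : ℕ → ℝ
  hN : 0 < N
  left : τ 0 = 0
  right : τ N = T
  mono : ∀ i < N, τ i < τ (i + 1)

/-- The mesh size `h = max_i (τ_{i+1} - τ_i)` of a partition. -/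
def Partition'.mesh {T : ℝ} (P : Partition' T) : ℝ :=
  (Finset.range P.N).sup' (Finset.nonempty_range_iff.mpr P.hN.ne') fun i => P.τ (i + 1) - P.τ i

/-- `v` is (on `[0,T]`) piecewise affine w.r.t. the partition `P`,
i.e. `v` belongs to the piecewise linear finite element space `X^h`. -/
def PWLinear {d : ℕ} {T : ℝ} (P : Partition' T) (v : ℝ → Euc d) : Prop :=
  ∀ i < P.N, ∃ a b : Euc d, ∀ t ∈ Icc (P.τ i) (P.τ (i + 1)), v t = a + t • b

/-- `(p, p')` is the orthogonal projection `Π_h (u,u')` of `(u, u') ∈ X` onto the piecewise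
linear finite element space `X^h` attached to the partition `P`. -/
def IsProjX {d : ℕ} {T : ℝ} (P : Partition' T) (u u' p p' : ℝ → Euc d) : Prop :=
  MemX T p p' ∧ PWLinear P p ∧
  ∀ v v' : ℝ → Euc d, MemX T v v' → PWLinear P v →
    innerX T (fun t => u t - p t) (fun t => u' t - p' t) v v' = 0

/-- `(y, y')` is a strong solution of the IVP `y' = F(y) + f(t)`, `y(0) = g`. -/
def IsStrongSol {d : ℕ} (T : ℝ) (F : Euc d → Euc d) (f : ℝ → Euc d) (g : Euc d)
    (y y' : ℝ → Euc d) : Prop :=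
  MemX T y y' ∧ y 0 = g ∧ ∀ᵐ t ∂(volume.restrict (Ioc (0:ℝ) T)), y' t = F (y t) + f t

/-- `(y, y')` is an lsfem solution: a global minimizer of `J(·;F,f,g)` over `X^h`. -/
def IsLSFEMSol {d : ℕ} (T : ℝ) (F : Euc d → Euc d) (f : ℝ → Euc d) (g : Euc d)
    (P : Partition' T) (y y' : ℝ → Euc d) : Prop :=
  MemX T y y' ∧ PWLinear P y ∧
  ∀ z z' : ℝ → Euc d, MemX T z z' → PWLinear P z →
    Jfun T F f g y y' ≤ Jfun T F f g z z'

/-- `c` is the smallest constant with `max_{t∈[0,T]} ‖u(t)‖ ≤ c ‖u‖_X` for all `u ∈ X`. -/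
def IsEmbC (d : ℕ) (T : ℝ) (c : ℝ) : Prop :=
  IsLeast {a : ℝ | ∀ u u' : ℝ → Euc d, MemX T u u' →
    ∀ t ∈ Icc (0:ℝ) T, ‖u t‖ ≤ a * normX T u u'} c

/-- `c` is the smallest constant with `‖u‖_{L²} ≤ c ‖u‖_X` for all `u ∈ X`. -/
def IsEmbL2 (d : ℕ) (T : ℝ) (c : ℝ) : Prop :=
  IsLeast {a : ℝ | ∀ u u' : ℝ → Euc d, MemX T u u' → L2norm T u ≤ a * normX T u u'} c

/-- The smallness bound `1/√(2T² + T + c² + √((2T² + T + c²)² + 2Tc²(1+2T)))` from (A2). -/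
def A2bound (T c : ℝ) : ℝ :=
  1 / Real.sqrt (2*T^2 + T + c^2 + Real.sqrt ((2*T^2 + T + c^2)^2 + 2*T*c^2*(1+2*T)))

/-- Estimate (Eq_errest2): if `F` is `L`-Lipschitz on `B`, `y_*` is a strong solution of
the IVP staying in `B`, `u ∈ X` stays in `B`, and `w(t) = g + ∫₀ᵗ (F(u(s)) + f(s)) ds`,
then `‖y_* − w‖_{L²} ≤ (LT/√2) ‖y_* − u‖_{L²}`. -/
theorem lsfem_lipschitz_L2_estimate
    {d : ℕ} {T : ℝ} (hT : 0 < T)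
    (F : Euc d → Euc d) (f : ℝ → Euc d) (g : Euc d)
    (hf : MemLp f 2 (volume.restrict (Icc (0:ℝ) T)))
    (B : Set (Euc d)) (L : ℝ) (hL : 0 ≤ L)
    (hLip : ∀ p ∈ B, ∀ q ∈ B, ‖F p - F q‖ ≤ L * ‖p - q‖)
    (y y' : ℝ → Euc d) (hy : IsStrongSol T F f g y y')
    (hyB : ∀ t ∈ Icc (0:ℝ) T, y t ∈ B)
    (u u' : ℝ → Euc d) (hu : MemX T u u')
    (huB : ∀ t ∈ Icc (0:ℝ) T, u t ∈ B) :
    L2norm T (fun t => y t - (g + ∫ s in (0:ℝ)..t, (F (u s) + f s))) ≤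
      L * T / Real.sqrt 2 * L2norm T (fun t => y t - u t) := by

  have hT0 : (0:ℝ) ≤ T := hT.le
  obtain ⟨⟨hy'L2, hyInt⟩, hy0, hyODE⟩ := hy
  obtain ⟨hu'L2, huInt⟩ := hu
  have hIcc : uIcc (0:ℝ) T = Icc 0 T := uIcc_of_le hT0
  haveI : IsFiniteMeasure (volume.restrict (Icc (0:ℝ) T)) :=
    ⟨by rw [Measure.restrict_apply_univ]; exact measure_Icc_lt_top⟩
  have hy'int : IntegrableOn y' (Icc 0 T) := hy'L2.integrable one_le_two
  have hu'int : IntegrableOn u' (Icc 0 T) := hu'L2.integrable one_le_two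
  have hfint : IntegrableOn f (Icc 0 T) := hf.integrable one_le_two
  -- continuity of y and u on [0,T]
  have hycont : ContinuousOn y (Icc 0 T) := by
    refine (continuousOn_const.add ?_).congr fun t ht => hyInt t ht
    simpa [hIcc] using
      intervalIntegral.continuousOn_primitive_interval (a := (0:ℝ)) (b := T) (f := y')
        (μ := volume) (by rwa [hIcc])
  have hucont : ContinuousOn u (Icc 0 T) := by
    refine (continuousOn_const.add ?_).congr fun t ht => huInt t ht
    simpa [hIcc] using
      intervalIntegral.continuousOn_primitive_interval (a := (0:ℝ)) (b := T) (f := u')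
        (μ := volume) (by rwa [hIcc])
  -- Lipschitz continuity of F on B
  have hFc : ContinuousOn F B := by
    refine (LipschitzOnWith.of_dist_le_mul (K := L.toNNReal) (s := B) ?_).continuousOn
    intro p hp q hq
    simpa [dist_eq_norm, Real.coe_toNNReal L hL] using hLip p hp q hq
  have hFy : ContinuousOn (fun s => F (y s)) (Icc 0 T) :=
    hFc.comp hycont fun t ht => hyB t ht
  have hFu : ContinuousOn (fun s => F (u s)) (Icc 0 T) :=
    hFc.comp hucont fun t ht => huB t ht
  -- key identity
  have hkey : ∀ t ∈ Icc (0:ℝ) T,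
      y t - (g + ∫ s in (0:ℝ)..t, (F (u s) + f s)) =
        ∫ s in (0:ℝ)..t, (F (y s) - F (u s)) := by
    intro t ht
    have ht0 := ht.1
    have htT := ht.2
    have h1' : IntegrableOn (fun s => F (y s) + f s) (Icc 0 T) volume :=
      (hFy.integrableOn_Icc).add hfint
    have h2' : IntegrableOn (fun s => F (u s) + f s) (Icc 0 T) volume :=
      (hFu.integrableOn_Icc).add hfint
    have h1 : IntervalIntegrable (fun s => F (y s) + f s) volume 0 t := by
      rw [intervalIntegrable_iff_integrableOn_Icc_of_le ht0]
      exact h1'.mono_set (Icc_subset_Icc_right htT)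
    have h2 : IntervalIntegrable (fun s => F (u s) + f s) volume 0 t := by
      rw [intervalIntegrable_iff_integrableOn_Icc_of_le ht0]
      exact h2'.mono_set (Icc_subset_Icc_right htT)
    have hyy : y t = g + ∫ s in (0:ℝ)..t, (F (y s) + f s) := by
      rw [hyInt t ht, hy0]
      congr 1
      rw [intervalIntegral.integral_of_le ht0, intervalIntegral.integral_of_le ht0]
      refine integral_congr_ae ?_
      exact ae_restrict_of_ae_restrict_of_subset (Ioc_subset_Ioc le_rfl htT) hyODE
    rw [hyy, add_sub_add_left_eq_sub, ← intervalIntegral.integral_sub h1 h2]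
    simp only [add_sub_add_right_eq_sub]
  -- abbreviation
  set I : ℝ := ∫ t in (0:ℝ)..T, ‖y t - u t‖ ^ 2 with hIdef
  have hhcont : ContinuousOn (fun s => ‖y s - u s‖) (Icc 0 T) := (hycont.sub hucont).norm
  have hh2cont : ContinuousOn (fun s => ‖y s - u s‖ ^ 2) (Icc 0 T) := hhcont.pow 2
  have hI0 : 0 ≤ I := intervalIntegral.integral_nonneg hT0 fun s _ => sq_nonneg _
  -- Cauchy–Schwarz on [0,t]
  have hCS : ∀ t ∈ Icc (0:ℝ) T,
      (∫ s in (0:ℝ)..t, ‖y s - u s‖) ≤ Real.sqrt t * Real.sqrt I := by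
    intro t ht
    have ht0 := ht.1
    have htT := ht.2
    set μ := volume.restrict (Ioc (0:ℝ) t) with hμ
    haveI : IsFiniteMeasure μ := ⟨by rw [hμ, Measure.restrict_apply_univ]; exact measure_Ioc_lt_top⟩
    have hsub : Ioc (0:ℝ) t ⊆ Icc 0 T := (Ioc_subset_Icc_self).trans (Icc_subset_Icc_right htT)
    have hmeas : AEStronglyMeasurable (fun s => ‖y s - u s‖) μ :=
      (hhcont.aestronglyMeasurable measurableSet_Icc).mono_measure
        (Measure.restrict_mono hsub le_rfl)
    obtain ⟨C, hC⟩ := isCompact_Icc.exists_bound_of_continuousOn hhcont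
    have hmem : MemLp (fun s => ‖y s - u s‖) (ENNReal.ofReal 2) μ := by
      refine MemLp.of_bound hmeas C ?_
      rw [hμ]
      refine (ae_restrict_iff' measurableSet_Ioc).2 (ae_of_all _ fun s hs => ?_)
      exact hC s (hsub hs)
    have hone : MemLp (fun _ : ℝ => (1:ℝ)) (ENNReal.ofReal 2) μ := memLp_const 1
    have hpq : (2:ℝ).HolderConjugate 2 := Real.HolderConjugate.two_two
    have hH := integral_mul_le_Lp_mul_Lq_of_nonneg (μ := μ) hpq
      (ae_of_all _ fun _ => zero_le_one) (ae_of_all _ fun s => norm_nonneg _) hone hmem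
    simp only [one_mul, Real.one_rpow] at hH
    have h1int : (∫ _ : ℝ, (1:ℝ) ∂μ) = t := by
      rw [integral_const, smul_eq_mul, mul_one, hμ, measureReal_def, Measure.restrict_apply_univ,
        Real.volume_Ioc, ENNReal.toReal_ofReal (by linarith), sub_zero]
    have hrp : ∀ s : ℝ, ‖y s - u s‖ ^ (2:ℝ) = ‖y s - u s‖ ^ (2:ℕ) := fun s =>
      Real.rpow_natCast _ 2
    have h2le : (∫ s, ‖y s - u s‖ ^ (2:ℝ) ∂μ) ≤ I := by
      simp only [hrp]
      rw [hIdef, intervalIntegral.integral_of_le hT0, hμ]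
      refine setIntegral_mono_set (hh2cont.integrableOn_Icc.mono_set Ioc_subset_Icc_self)
        (ae_of_all _ fun s => sq_nonneg _) (HasSubset.Subset.eventuallyLE (Ioc_subset_Ioc le_rfl htT))
    have h2nn : 0 ≤ ∫ s, ‖y s - u s‖ ^ (2:ℝ) ∂μ :=
      integral_nonneg fun s => Real.rpow_nonneg (norm_nonneg _) _
    calc (∫ s in (0:ℝ)..t, ‖y s - u s‖) = ∫ s, ‖y s - u s‖ ∂μ := by
          rw [intervalIntegral.integral_of_le ht0, hμ]
      _ ≤ (∫ _ : ℝ, (1:ℝ) ∂μ) ^ ((1:ℝ)/2) * (∫ s, ‖y s - u s‖ ^ (2:ℝ) ∂μ) ^ ((1:ℝ)/2) := hH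
      _ ≤ t ^ ((1:ℝ)/2) * I ^ ((1:ℝ)/2) := by
          rw [h1int]
          exact mul_le_mul_of_nonneg_left (Real.rpow_le_rpow h2nn h2le (by norm_num))
            (Real.rpow_nonneg (by linarith) _)
      _ = Real.sqrt t * Real.sqrt I := by
          rw [Real.sqrt_eq_rpow, Real.sqrt_eq_rpow]
  -- pointwise bound
  have hbd : ∀ t ∈ Icc (0:ℝ) T,
      ‖y t - (g + ∫ s in (0:ℝ)..t, (F (u s) + f s))‖ ≤ L * (Real.sqrt t * Real.sqrt I) := by
    intro t ht
    have ht0 := ht.1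
    have htT := ht.2
    have hi1 : IntervalIntegrable (fun s => ‖F (y s) - F (u s)‖) volume 0 t :=
      ((hFy.sub hFu).norm.mono (Icc_subset_Icc_right htT)).intervalIntegrable_of_Icc ht0
    have hi2 : IntervalIntegrable (fun s => L * ‖y s - u s‖) volume 0 t :=
      ((continuousOn_const.mul hhcont).mono (Icc_subset_Icc_right htT)).intervalIntegrable_of_Icc ht0
    rw [hkey t ht]
    calc ‖∫ s in (0:ℝ)..t, (F (y s) - F (u s))‖
        ≤ ∫ s in (0:ℝ)..t, ‖F (y s) - F (u s)‖ :=
          intervalIntegral.norm_integral_le_integral_norm ht0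
      _ ≤ ∫ s in (0:ℝ)..t, L * ‖y s - u s‖ := by
          refine intervalIntegral.integral_mono_on ht0 hi1 hi2 fun s hs => ?_
          have hs' : s ∈ Icc (0:ℝ) T := Icc_subset_Icc_right htT hs
          exact hLip _ (hyB s hs') _ (huB s hs')
      _ = L * ∫ s in (0:ℝ)..t, ‖y s - u s‖ := by
          rw [intervalIntegral.integral_const_mul]
      _ ≤ L * (Real.sqrt t * Real.sqrt I) :=
          mul_le_mul_of_nonneg_left (hCS t ht) hL
  -- continuity of the error
  have hwcont : ContinuousOn (fun t => y t - (g + ∫ s in (0:ℝ)..t, (F (u s) + f s))) (Icc 0 T) := by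
    refine hycont.sub (continuousOn_const.add ?_)
    refine intervalIntegral.continuousOn_primitive_interval (μ := volume) ?_ |>.mono (by rw [hIcc])
    rw [hIcc]
    exact (hFu.integrableOn_Icc).add hfint
  -- integrate the square of the bound
  have hmain : (∫ t in (0:ℝ)..T, ‖y t - (g + ∫ s in (0:ℝ)..t, (F (u s) + f s))‖ ^ 2)
      ≤ L ^ 2 * I * (T ^ 2 / 2) := by
    have hint1 : IntervalIntegrable
        (fun t => ‖y t - (g + ∫ s in (0:ℝ)..t, (F (u s) + f s))‖ ^ 2) volume 0 T :=
      (hwcont.norm.pow 2).intervalIntegrable_of_Icc hT0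
    have hint2 : IntervalIntegrable (fun t => L ^ 2 * I * t) volume 0 T :=
      (continuous_const.mul continuous_id).intervalIntegrable 0 T
    calc (∫ t in (0:ℝ)..T, ‖y t - (g + ∫ s in (0:ℝ)..t, (F (u s) + f s))‖ ^ 2)
        ≤ ∫ t in (0:ℝ)..T, L ^ 2 * I * t := by
          refine intervalIntegral.integral_mono_on hT0 hint1 hint2 fun t ht => ?_
          have h1 := hbd t ht
          have h2 : ‖y t - (g + ∫ s in (0:ℝ)..t, (F (u s) + f s))‖ ^ 2
              ≤ (L * (Real.sqrt t * Real.sqrt I)) ^ 2 :=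
            pow_le_pow_left₀ (norm_nonneg _) h1 2
          refine h2.trans_eq ?_
          rw [mul_pow, mul_pow, Real.sq_sqrt ht.1, Real.sq_sqrt hI0]
          ring
      _ = L ^ 2 * I * (T ^ 2 / 2) := by
          rw [intervalIntegral.integral_const_mul, integral_id]
          ring
  -- conclude
  have hsq : L ^ 2 * I * (T ^ 2 / 2) = (L * T / Real.sqrt 2 * Real.sqrt I) ^ 2 := by
    have h2 : (Real.sqrt 2) ^ 2 = 2 := Real.sq_sqrt (by norm_num)
    have hI : (Real.sqrt I) ^ 2 = I := Real.sq_sqrt hI0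
    rw [mul_pow, div_pow, h2, hI, mul_pow]
    ring
  have hfinal : L2norm T (fun t => y t - (g + ∫ s in (0:ℝ)..t, (F (u s) + f s)))
      ≤ Real.sqrt (L ^ 2 * I * (T ^ 2 / 2)) := Real.sqrt_le_sqrt hmain
  refine hfinal.trans_eq ?_
  rw [hsq, Real.sqrt_sq (by positivity), L2norm, ← hIdef]
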